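/- With the Kerr–Newman–AdS quantities M, S, J, Q, T, Ω, Φ regarded as smooth functions of the independent parameters (r₊, a, q) on the open domain where r₊ > 0, 0 ≤ |a| < l, Ξ = 1 − a²/l² ≠ 0 (and m eliminated via m = [ (r₊²+a²)(1+r₊²/l²) + q² ]/(2r₊)), the first law of black hole mechanics holds as an identity of differential one-forms: dM = T dS + Ω dJ + Φ dQ, i.e., ∂M/∂x = T ∂S/∂x + Ω ∂J/∂x + Φ ∂Q/∂x for each x ∈ {r₊, a, q}. -/

import Mathlib

open Real

noncomputable section KNAdS

/-- `m` eliminated via the horizon condition: `m = [(r₊²+a²)(1+r₊²/l²)+q²]/(2r₊)`. -/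
def KNm (l r a q : ℝ) : ℝ := ((r^2+a^2)*(1+r^2/l^2)+q^2)/(2*r)

/-- Holographic mass `M = 8πm/(κ²Ξ²)`. -/
def KNM (l κ r a q : ℝ) : ℝ := 8*π*KNm l r a q/(κ^2*(1-a^2/l^2)^2)

/-- Angular momentum `J = 8πma/(κ²Ξ²)`. -/
def KNJ (l κ r a q : ℝ) : ℝ := 8*π*(KNm l r a q)*a/(κ^2*(1-a^2/l^2)^2)

/-- Electric charge `Q = 4πq/(κ²Ξ)`. -/
def KNQ (l κ r a q : ℝ) : ℝ := 4*π*q/(κ^2*(1-a^2/l^2))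

/-- Entropy `S = 8π²(r₊²+a²)/(κ²Ξ)`. -/
def KNS (l κ r a q : ℝ) : ℝ := 8*π^2*(r^2+a^2)/(κ^2*(1-a^2/l^2))

/-- Temperature `T`. -/
def KNT (l r a q : ℝ) : ℝ := r*(1+a^2/l^2+3*r^2/l^2-(a^2+q^2)/r^2)/(4*π*(r^2+a^2))

/-- Angular velocity `Ω = a(1+r₊²/l²)/(r₊²+a²)`. -/
def KNΩ (l r a : ℝ) : ℝ := a*(1+r^2/l^2)/(r^2+a^2)

/-- Electric potential `Φ = 2qr₊/(r₊²+a²)`. -/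
def KNΦ (r a q : ℝ) : ℝ := 2*q*r/(r^2+a^2)

set_option maxHeartbeats 1000000 in
/-- First law of black hole mechanics for the Kerr–Newman–AdS black
hole, `dM = T dS + Ω dJ + Φ dQ`, as an identity of one-forms on the parameter space
`(r₊, a, q)`: the partial derivative identity holds for each of the three independent
parameters. -/
theorem stmt_10 (l κ r a q : ℝ) (hl : 0 < l) (hκ : κ ≠ 0) (hr : 0 < r) (ha : |a| < l)
    (hΞ : 1 - a^2/l^2 ≠ 0) :
    (deriv (fun x => KNM l κ x a q) r =
        KNT l r a q * deriv (fun x => KNS l κ x a q) r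
      + KNΩ l r a * deriv (fun x => KNJ l κ x a q) r
      + KNΦ r a q * deriv (fun x => KNQ l κ x a q) r) ∧
    (deriv (fun x => KNM l κ r x q) a =
        KNT l r a q * deriv (fun x => KNS l κ r x q) a
      + KNΩ l r a * deriv (fun x => KNJ l κ r x q) a
      + KNΦ r a q * deriv (fun x => KNQ l κ r x q) a) ∧
    (deriv (fun x => KNM l κ r a x) q =
        KNT l r a q * deriv (fun x => KNS l κ r a x) q
      + KNΩ l r a * deriv (fun x => KNJ l κ r a x) q
      + KNΦ r a q * deriv (fun x => KNQ l κ r a x) q) := by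
  have hπ : (π:ℝ) ≠ 0 := Real.pi_ne_zero
  have hl2a : l^2 - a^2 ≠ 0 := by
    have h1 : a^2 < l^2 := by
      have := sq_abs a
      nlinarith [abs_nonneg a]
    nlinarith
  have hr0 : r ≠ 0 := ne_of_gt hr
  have hl0 : l ≠ 0 := ne_of_gt hl
  have hra : r^2 + a^2 ≠ 0 := by positivity
  have hκΞ2 : κ^2*(1-a^2/l^2)^2 ≠ 0 := by
    exact mul_ne_zero (pow_ne_zero 2 hκ) (pow_ne_zero 2 hΞ)
  have hκΞ : κ^2*(1-a^2/l^2) ≠ 0 := mul_ne_zero (pow_ne_zero 2 hκ) hΞ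
  -- r-derivatives
  have h2x : HasDerivAt (fun x : ℝ => 2*x) 2 r := by
    simpa using (hasDerivAt_id r).const_mul 2
  have hn : HasDerivAt (fun x : ℝ => (x^2+a^2)*(1+x^2/l^2)+q^2)
      (2*r*(1+r^2/l^2)+(r^2+a^2)*(2*r/l^2)) r := by
    have h1 : HasDerivAt (fun x : ℝ => x^2+a^2) (2*r) r := by
      simpa using (hasDerivAt_pow 2 r).add_const (a^2)
    have h2 : HasDerivAt (fun x : ℝ => 1+x^2/l^2) (2*r/l^2) r := by
      simpa using ((hasDerivAt_pow 2 r).div_const (l^2)).const_add 1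
    simpa using (h1.mul h2).add_const (q^2)
  have hmr : HasDerivAt (fun x => KNm l x a q)
      (((2*r*(1+r^2/l^2)+(r^2+a^2)*(2*r/l^2))*(2*r)
        - ((r^2+a^2)*(1+r^2/l^2)+q^2)*2)/(2*r)^2) r := by
    simpa [KNm, Pi.div_def] using hn.div h2x (by simpa using hr0)
  have hMr := ((hmr.const_mul (8*π)).div_const (κ^2*(1-a^2/l^2)^2)).deriv
  have hJr := (((hmr.const_mul (8*π)).mul_const a).div_const (κ^2*(1-a^2/l^2)^2)).deriv
  have hSr : deriv (fun x => KNS l κ x a q) r = 8*π^2*(2*r)/(κ^2*(1-a^2/l^2)) := by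
    have h1 : HasDerivAt (fun x : ℝ => x^2+a^2) (2*r) r := by
      simpa using (hasDerivAt_pow 2 r).add_const (a^2)
    exact (((h1.const_mul (8*π^2)).div_const (κ^2*(1-a^2/l^2))).deriv).trans (by ring)
  have hQr : deriv (fun x => KNQ l κ x a q) r = 0 := by
    simp [KNQ]
  -- a-derivatives
  have hΞa : HasDerivAt (fun x : ℝ => 1-x^2/l^2) (-(2*a/l^2)) a := by
    simpa using ((hasDerivAt_pow 2 a).div_const (l^2)).const_sub 1
  have hga : HasDerivAt (fun x : ℝ => κ^2*(1-x^2/l^2)^2)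
      (κ^2*(2*(1-a^2/l^2)^1*(-(2*a/l^2)))) a := (hΞa.pow 2).const_mul (κ^2)
  have hma : HasDerivAt (fun x => KNm l r x q)
      ((2*a*(1+r^2/l^2))/(2*r)) a := by
    have h1 : HasDerivAt (fun x : ℝ => (r^2+x^2)*(1+r^2/l^2)+q^2)
        (2*a*(1+r^2/l^2)) a := by
      simpa using (((hasDerivAt_pow 2 a).const_add (r^2)).mul_const (1+r^2/l^2)).add_const (q^2)
    simpa [KNm] using h1.div_const (2*r)
  have hMa := ((hma.const_mul (8*π)).div hga hκΞ2).deriv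
  have hJa := (((hma.const_mul (8*π)).mul (hasDerivAt_id a)).div hga hκΞ2).deriv
  have hha : HasDerivAt (fun x : ℝ => κ^2*(1-x^2/l^2)) (κ^2*(-(2*a/l^2))) a :=
    hΞa.const_mul (κ^2)
  have hSa := ((((hasDerivAt_pow 2 a).const_add (r^2)).const_mul (8*π^2)).div hha hκΞ).deriv
  have hQa := ((hasDerivAt_const a (4*π*q)).div hha hκΞ).deriv
  -- q-derivatives
  have hmq : HasDerivAt (fun x => KNm l r a x) ((2*q)/(2*r)) q := by
    have h1 : HasDerivAt (fun x : ℝ => (r^2+a^2)*(1+r^2/l^2)+x^2) (2*q) q := by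
      simpa using (hasDerivAt_pow 2 q).const_add ((r^2+a^2)*(1+r^2/l^2))
    simpa [KNm] using h1.div_const (2*r)
  have hMq := ((hmq.const_mul (8*π)).div_const (κ^2*(1-a^2/l^2)^2)).deriv
  have hJq := (((hmq.const_mul (8*π)).mul_const a).div_const (κ^2*(1-a^2/l^2)^2)).deriv
  have hSq : deriv (fun x => KNS l κ r a x) q = 0 := by simp [KNS]
  have hQq := (((hasDerivAt_id q).const_mul (4*π)).div_const (κ^2*(1-a^2/l^2))).deriv
  refine ⟨?_, ?_, ?_⟩
  · simp only [KNM, KNJ, KNm] at hMr hJr ⊢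
    rw [hMr, hJr, hSr, hQr, KNT, KNΩ, KNΦ]
    field_simp [hl2a, hr0, hl0, hκ, hπ, hra]
    ring
  · simp only [KNM, KNJ, KNS, KNQ, KNm, id_eq, Pi.div_def, Pi.mul_def] at hMa hJa hSa hQa ⊢
    rw [hMa, hJa, hSa, hQa, KNT, KNΩ, KNΦ]
    field_simp [hl2a, hr0, hl0, hκ, hπ, hra]
    ring
  · simp only [KNM, KNJ, KNQ, KNm, id_eq] at hMq hJq hQq ⊢
    rw [hMq, hJq, hSq, hQq, KNT, KNΩ, KNΦ]
    field_simp [hl2a, hr0, hl0, hκ, hπ, hra]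
    ring

end KNAdS
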